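/- arXiv:1911.02151 — 2 statements merged into one kernel-verified Lean document; each statement's English description precedes it below -/
import Mathlib

section
/- Mutual information bound for generalization (Xu–Raginsky): let $S = (Z_1,\dots,Z_n)$ be i.i.d. from $\mathcal{D}$ and $W$ a random element (possibly dependent on $S$). Suppose $\ell(Z,w)$ is $\sigma$-subgaussian for $Z \sim \mathcal{D}$, for each $w \in \mathcal{W}$. Then $\big|\mathbb{E}[R_{\mathcal{D}}(W) - \hat{R}_S(W)]\big| \le \sqrt{\frac{2\sigma^2}{n} I(S;W)}$, where $R_{\mathcal{D}}(w) = \mathbb{E}_{Z\sim\mathcal{D}}\ell(Z,w)$ and $\hat{R}_S(w) = \frac{1}{n}\sum_{i=1}^n \ell(Z_i,w)$. -/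
open MeasureTheory ProbabilityTheory Real Classical



lemma jensen_log {α : Type*} [MeasurableSpace α] (μ : Measure α) [IsProbabilityMeasure μ]
    {h : α → ℝ} (hh : Integrable h μ) (hexp : Integrable (fun x => exp (h x)) μ) :
    ∫ x, h x ∂μ ≤ log (∫ x, exp (h x) ∂μ) := by
  have hj : exp (∫ x, h x ∂μ) ≤ ∫ x, exp (h x) ∂μ :=
    convexOn_exp.map_integral_le continuous_exp.continuousOn isClosed_univ
      (Filter.Eventually.of_forall fun _ => Set.mem_univ _) hh hexp
  calc ∫ x, h x ∂μ = log (exp (∫ x, h x ∂μ)) := (Real.log_exp _).symm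
    _ ≤ log (∫ x, exp (h x) ∂μ) := Real.log_le_log (exp_pos _) hj

lemma gibbs_nonneg {α : Type*} [MeasurableSpace α] {μ ν : Measure α}
    [IsProbabilityMeasure μ] [IsProbabilityMeasure ν]
    (hμν : μ ≪ ν) (h_int : Integrable (llr μ ν) μ) :
    0 ≤ ∫ x, llr μ ν x ∂μ := by
  set r := μ.rnDeriv ν with hr
  have hrm : Measurable r := Measure.measurable_rnDeriv μ ν
  have hae : (fun x => exp (-llr μ ν x)) =ᵐ[μ] fun x => ((r x).toReal)⁻¹ := by
    filter_upwards [Measure.rnDeriv_pos hμν, hμν.ae_le (Measure.rnDeriv_lt_top μ ν)]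
      with x h0 hlt
    have hpos : 0 < (r x).toReal := ENNReal.toReal_pos h0.ne' hlt.ne
    rw [llr_def, Real.exp_neg, Real.exp_log hpos]
  have hlint : ∫⁻ x, ENNReal.ofReal (((r x).toReal)⁻¹) ∂μ ≤ 1 := by
    conv_lhs => rw [← Measure.withDensity_rnDeriv_eq μ ν hμν]
    rw [lintegral_withDensity_eq_lintegral_mul _ hrm
      (show Measurable fun x => ENNReal.ofReal ((r x).toReal)⁻¹ from hrm.ennreal_toReal.inv.ennreal_ofReal)]
    calc ∫⁻ x, (r * fun x => ENNReal.ofReal ((r x).toReal)⁻¹) x ∂ν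
        ≤ ∫⁻ _, 1 ∂ν := by
          refine lintegral_mono_ae ?_
          filter_upwards [Measure.rnDeriv_lt_top μ ν] with x hlt
          simp only [Pi.mul_apply]
          rcases eq_or_ne (r x) 0 with h0 | h0
          · simp [h0]
          · rw [← ENNReal.toReal_inv, ENNReal.ofReal_toReal (by simp [h0]),
              ENNReal.mul_inv_cancel h0 hlt.ne]
      _ = 1 := by simp
  have hnn : (0:α → ℝ) ≤ᵐ[μ] fun x => ((r x).toReal)⁻¹ :=
    Filter.Eventually.of_forall fun x => by
      simp only [Pi.zero_apply]; positivity
  have hint' : Integrable (fun x => ((r x).toReal)⁻¹) μ := by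
    refine ⟨(hrm.ennreal_toReal.inv).aestronglyMeasurable, ?_⟩
    rw [hasFiniteIntegral_iff_ofReal hnn]
    exact lt_of_le_of_lt hlint ENNReal.one_lt_top
  have hval : ∫ x, exp (-llr μ ν x) ∂μ ≤ 1 := by
    rw [integral_congr_ae hae]
    have := ofReal_integral_eq_lintegral_ofReal hint' hnn
    have h1 : ENNReal.ofReal (∫ x, ((r x).toReal)⁻¹ ∂μ) ≤ 1 := this ▸ hlint
    have h2 : (0:ℝ) ≤ ∫ x, ((r x).toReal)⁻¹ ∂μ := integral_nonneg fun x => by positivity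
    exact (ENNReal.ofReal_le_one).mp h1
  have hexpint : Integrable (fun x => exp (-llr μ ν x)) μ :=
    (integrable_congr hae).mpr hint'
  have hjen := jensen_log μ h_int.neg hexpint
  simp only [Pi.neg_apply] at hjen
  rw [integral_neg] at hjen
  have hlog : log (∫ x, exp (-llr μ ν x) ∂μ) ≤ 0 :=
    Real.log_nonpos (integral_nonneg fun x => (exp_pos _).le) hval
  linarith

lemma donsker_varadhan {α : Type*} [MeasurableSpace α] {μ ν : Measure α}
    [IsProbabilityMeasure μ] [IsProbabilityMeasure ν]
    (hμν : μ ≪ ν) (hllr : Integrable (llr μ ν) μ) {g : α → ℝ}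
    (hg : Integrable g μ) (hexp : Integrable (fun x => exp (g x)) ν) :
    ∫ x, g x ∂μ ≤ ∫ x, llr μ ν x ∂μ + log (∫ x, exp (g x) ∂ν) := by
  have hprob : IsProbabilityMeasure (ν.tilted g) := isProbabilityMeasure_tilted hexp
  have hac : μ ≪ ν.tilted g := hμν.trans (absolutelyContinuous_tilted hexp)
  have hint : Integrable (llr μ (ν.tilted g)) μ :=
    integrable_llr_tilted_right hμν hg hllr hexp
  have h0 := gibbs_nonneg hac hint
  rw [integral_llr_tilted_right hμν hg hexp hllr] at h0
  linarith

lemma opt_lambda {a b c : ℝ} (hb : 0 ≤ b) (h : ∀ lam : ℝ, lam * a ≤ c + lam ^ 2 * b) :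
    |a| ≤ Real.sqrt (4 * b * c) := by
  have hc : 0 ≤ c := by have := h 0; simpa using this
  rcases eq_or_lt_of_le hb with hb0 | hb0
  · have ha : a = 0 := by
      by_contra ha
      have := h ((c + 1) / a)
      rw [div_mul_cancel₀ _ ha, ← hb0] at this
      simp at this
      linarith
    simp [ha, Real.sqrt_nonneg]
  · have hkey : a ^ 2 ≤ 4 * b * c := by
      have h' := h (a / (2 * b))
      have e1 : a / (2 * b) * a = a ^ 2 / (2 * b) := by ring
      have e2 : (a / (2 * b)) ^ 2 * b = a ^ 2 / (4 * b) := by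
        field_simp; ring
      rw [e1, e2] at h'
      rw [div_le_iff₀ (by linarith)] at h'
      have e3 : (c + a ^ 2 / (4 * b)) * (2 * b) = 2 * b * c + a ^ 2 / 2 := by
        field_simp; ring
      rw [e3] at h'
      linarith
    calc |a| = Real.sqrt (a ^ 2) := (Real.sqrt_sq_eq_abs a).symm
      _ ≤ Real.sqrt (4 * b * c) := Real.sqrt_le_sqrt hkey


noncomputable def klDiv {α : Type*} [MeasurableSpace α] (μ ν : Measure α) : EReal :=
  if μ ≪ ν ∧ Integrable (llr μ ν) μ then ((∫ x, llr μ ν x ∂μ : ℝ) : EReal) else ⊤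

/-- Xu–Raginsky mutual information generalization bound: if `S = (Z₁,…,Z_n)` is i.i.d.
from `D`, `W` is a (possibly `S`-dependent) learned parameter, and `ℓ(Z, w)` is
`σ`-subgaussian for `Z ~ D` for every `w`, then
`|𝔼[R_D(W) - R̂_S(W)]| ≤ √((2σ²/n) · I(S;W))`, where `I(S;W)` is the mutual information
(here: any real upper bound `MI` on the KL divergence of the joint law from the product
of the marginals). -/
theorem xu_raginsky_generalization_bound
    {Ω 𝒵 𝒲 : Type*} [MeasurableSpace Ω] [MeasurableSpace 𝒵] [MeasurableSpace 𝒲]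
    (μ : Measure Ω) [IsProbabilityMeasure μ]
    (D : Measure 𝒵) [IsProbabilityMeasure D]
    (n : ℕ) (hn : 0 < n) (Z : Fin n → Ω → 𝒵) (hZ : ∀ i, Measurable (Z i))
    (hiid : μ.map (fun ω i => Z i ω) = Measure.pi (fun _ : Fin n => D))
    (W : Ω → 𝒲) (hW : Measurable W)
    (ℓ : 𝒵 → 𝒲 → ℝ) (hℓ : Measurable (fun p : 𝒵 × 𝒲 => ℓ p.1 p.2))
    (σ : ℝ) (hσ : 0 ≤ σ)
    (hℓint : ∀ w, Integrable (fun z => ℓ z w) D)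
    (hSGint : ∀ (w : 𝒲) (lam : ℝ),
      Integrable (fun z => exp (lam * (ℓ z w - ∫ z', ℓ z' w ∂D))) D)
    (hSG : ∀ (w : 𝒲) (lam : ℝ),
      ∫ z, exp (lam * (ℓ z w - ∫ z', ℓ z' w ∂D)) ∂D ≤ exp (lam ^ 2 * σ ^ 2 / 2))
    (hGenInt : Integrable
      (fun ω => (∫ z, ℓ z (W ω) ∂D) - (n : ℝ)⁻¹ * ∑ i, ℓ (Z i ω) (W ω)) μ)
    (MI : ℝ)
    (hMI : klDiv (μ.map (fun ω => ((fun i => Z i ω), W ω)))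
        ((μ.map (fun ω i => Z i ω)).prod (μ.map W)) ≤ (MI : EReal)) :
    |∫ ω, ((∫ z, ℓ z (W ω) ∂D) - (n : ℝ)⁻¹ * ∑ i, ℓ (Z i ω) (W ω)) ∂μ|
      ≤ Real.sqrt (2 * σ ^ 2 / n * MI) := by
  have hn' : (0:ℝ) < n := Nat.cast_pos.mpr hn
  -- basic objects
  set S : Ω → (Fin n → 𝒵) := fun ω i => Z i ω with hSdef
  have hS : Measurable S := measurable_pi_lambda _ hZ
  have hpair : Measurable fun ω => (S ω, W ω) := hS.prodMk hW
  set Pj : Measure ((Fin n → 𝒵) × 𝒲) := μ.map (fun ω => (S ω, W ω)) with hPjdef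
  set Pr : Measure ((Fin n → 𝒵) × 𝒲) := (μ.map S).prod (μ.map W) with hPrdef
  haveI : IsProbabilityMeasure (μ.map S) := Measure.isProbabilityMeasure_map hS.aemeasurable
  haveI : IsProbabilityMeasure (μ.map W) := Measure.isProbabilityMeasure_map hW.aemeasurable
  haveI : IsProbabilityMeasure Pj := Measure.isProbabilityMeasure_map hpair.aemeasurable
  haveI : IsProbabilityMeasure Pr := by rw [hPrdef]; infer_instance
  -- the mean function and generalization gap
  set m : 𝒲 → ℝ := fun w => ∫ z, ℓ z w ∂D with hmdef
  have hm : Measurable m := by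
    have : Measurable fun p : 𝒲 × 𝒵 => ℓ p.2 p.1 := hℓ.comp (measurable_snd.prodMk measurable_fst)
    exact this.stronglyMeasurable.integral_prod_right'.measurable
  set f : (Fin n → 𝒵) × 𝒲 → ℝ := fun p => m p.2 - (n : ℝ)⁻¹ * ∑ i, ℓ (p.1 i) p.2 with hfdef
  have hfm : Measurable f := by
    apply Measurable.sub (hm.comp measurable_snd)
    apply Measurable.const_mul
    refine Finset.measurable_sum _ fun i _ => ?_
    have hg : Measurable fun x : (Fin n → 𝒵) × 𝒲 => ((x.1 i, x.2) : 𝒵 × 𝒲) :=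
      ((measurable_pi_apply i).comp measurable_fst).prodMk measurable_snd
    exact hℓ.comp hg
  -- the KL facts
  have hklfacts : (μ.map (fun ω => ((fun i => Z i ω), W ω)) ≪
        (μ.map (fun ω i => Z i ω)).prod (μ.map W)) ∧
      Integrable (llr (μ.map (fun ω => ((fun i => Z i ω), W ω)))
        ((μ.map (fun ω i => Z i ω)).prod (μ.map W)))
        (μ.map (fun ω => ((fun i => Z i ω), W ω))) := by
    by_contra hcon
    rw [klDiv, if_neg hcon] at hMI
    simp at hMI
  have hPjPr : Pj ≪ Pr := hklfacts.1
  have hllrint : Integrable (llr Pj Pr) Pj := hklfacts.2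
  have hKL : ∫ x, llr Pj Pr x ∂Pj ≤ MI := by
    rw [klDiv, if_pos hklfacts] at hMI
    exact_mod_cast hMI
  -- integrability of f over Pj
  have hfPj : Integrable f Pj := by
    rw [hPjdef, integrable_map_measure hfm.aestronglyMeasurable hpair.aemeasurable]
    exact hGenInt
  -- the target integral equals ∫ f dPj
  have htarget : ∫ ω, ((∫ z, ℓ z (W ω) ∂D) - (n : ℝ)⁻¹ * ∑ i, ℓ (Z i ω) (W ω)) ∂μ
      = ∫ p, f p ∂Pj := by
    rw [hPjdef, integral_map hpair.aemeasurable hfm.aestronglyMeasurable]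
  -- subgaussian bound for fixed w
  set c : ℝ → ℝ := fun lam => lam ^ 2 * σ ^ 2 / (2 * n) with hcdef
  letI : MeasureSpace 𝒵 := ⟨D⟩
  have hvol : (volume : Measure 𝒵) = D := rfl
  have hvolpi : (volume : Measure (Fin n → 𝒵)) = Measure.pi (fun _ : Fin n => D) := rfl
  have hprodexp : ∀ (lam : ℝ) (w : 𝒲) (s : Fin n → 𝒵),
      exp (lam * f (s, w)) = ∏ i, exp ((-lam / n) * (ℓ (s i) w - m w)) := by
    intro lam w s
    rw [← Real.exp_sum]
    congr 1
    rw [← Finset.mul_sum, Finset.sum_sub_distrib, Finset.sum_const, Finset.card_univ,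
      Fintype.card_fin, nsmul_eq_mul]
    simp only [hfdef]
    field_simp
    ring
  have hIw : ∀ (lam : ℝ) (w : 𝒲),
      Integrable (fun s : Fin n → 𝒵 => exp (lam * f (s, w)))
        (Measure.pi fun _ : Fin n => D) := by
    intro lam w
    simp only [hprodexp lam w]
    rw [← hvolpi]
    exact Integrable.fintype_prod (f := fun _ z => exp ((-lam / n) * (ℓ z w - m w)))
      fun i => hSGint w (-lam / n)
  have hBw : ∀ (lam : ℝ) (w : 𝒲),
      ∫ s, exp (lam * f (s, w)) ∂(Measure.pi fun _ : Fin n => D) ≤ exp (c lam) := by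
    intro lam w
    simp only [hprodexp lam w]
    rw [integral_fintype_prod_eq_pow
      (fun z => exp ((-lam / n) * (ℓ z w - m w))), Fintype.card_fin]
    have h1 : ∫ z, exp ((-lam / n) * (ℓ z w - m w)) ∂D ≤ exp ((-lam / n) ^ 2 * σ ^ 2 / 2) :=
      hSG w (-lam / n)
    have h2 : (0:ℝ) ≤ ∫ z, exp ((-lam / n) * (ℓ z w - m w)) ∂D :=
      integral_nonneg fun z => (exp_pos _).le
    calc (∫ z, exp ((-lam / n) * (ℓ z w - m w)) ∂D) ^ n
        ≤ (exp ((-lam / n) ^ 2 * σ ^ 2 / 2)) ^ n := pow_le_pow_left₀ h2 h1 n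
      _ = exp (n * ((-lam / n) ^ 2 * σ ^ 2 / 2)) := by rw [← Real.exp_nat_mul]
      _ = exp (c lam) := by
          congr 1
          rw [hcdef]
          field_simp
  -- joint integrability and bound over Pr
  have hPrint : ∀ lam : ℝ, Integrable (fun p => exp (lam * f p)) Pr ∧
      ∫ p, exp (lam * f p) ∂Pr ≤ exp (c lam) := by
    intro lam
    have hmexp : Measurable fun p : (Fin n → 𝒵) × 𝒲 => exp (lam * f p) :=
      ((hfm.const_mul lam).exp)
    have hnn : ∀ p, (0:ℝ) ≤ exp (lam * f p) := fun p => (exp_pos _).le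
    have hlkey : ∫⁻ p, ENNReal.ofReal (exp (lam * f p)) ∂Pr ≤ ENNReal.ofReal (exp (c lam)) := by
      rw [hPrdef, hSdef, hiid, lintegral_prod_symm _ (hmexp.ennreal_ofReal.aemeasurable)]
      calc ∫⁻ w, ∫⁻ s, ENNReal.ofReal (exp (lam * f (s, w)))
            ∂(Measure.pi fun _ : Fin n => D) ∂(μ.map W)
          ≤ ∫⁻ _, ENNReal.ofReal (exp (c lam)) ∂(μ.map W) := by
            refine lintegral_mono fun w => ?_
            rw [← ofReal_integral_eq_lintegral_ofReal (hIw lam w)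
              (Filter.Eventually.of_forall fun s => hnn _)]
            exact ENNReal.ofReal_le_ofReal (hBw lam w)
        _ = ENNReal.ofReal (exp (c lam)) := by simp
    have hint : Integrable (fun p => exp (lam * f p)) Pr := by
      refine ⟨hmexp.aestronglyMeasurable, ?_⟩
      rw [hasFiniteIntegral_iff_ofReal (Filter.Eventually.of_forall hnn)]
      exact lt_of_le_of_lt hlkey ENNReal.ofReal_lt_top
    refine ⟨hint, ?_⟩
    have := ofReal_integral_eq_lintegral_ofReal hint (Filter.Eventually.of_forall hnn)
    rw [← ENNReal.ofReal_le_ofReal_iff (exp_pos _).le, this]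
    exact hlkey
  -- Donsker–Varadhan for each lam
  have hkey : ∀ lam : ℝ, lam * (∫ p, f p ∂Pj) ≤ MI + lam ^ 2 * (σ ^ 2 / (2 * n)) := by
    intro lam
    have hdv := donsker_varadhan hPjPr hllrint (hfPj.const_mul lam) (hPrint lam).1
    rw [integral_const_mul] at hdv
    have hlog : log (∫ p, exp (lam * f p) ∂Pr) ≤ c lam := by
      calc log (∫ p, exp (lam * f p) ∂Pr) ≤ log (exp (c lam)) :=
            Real.log_le_log (integral_exp_pos (hPrint lam).1) (hPrint lam).2
        _ = c lam := Real.log_exp _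
    have : c lam = lam ^ 2 * (σ ^ 2 / (2 * n)) := by rw [hcdef]; ring
    linarith [hKL]
  -- optimize
  rw [htarget]
  have hb : (0:ℝ) ≤ σ ^ 2 / (2 * n) := by positivity
  have := opt_lambda hb hkey
  have heq : 4 * (σ ^ 2 / (2 * n)) * MI = 2 * σ ^ 2 / n * MI := by
    field_simp; ring
  rwa [heq] at this
end

section
/- Data-dependent mutual information generalization bound: with $S \sim \mathcal{D}^n$ i.i.d., $J \subseteq [n]$ a uniformly random subset of size $m$ independent of $(S, W)$, and $\ell(Z,w)$ $\sigma$-subgaussian for each $w$, one has $\mathbb{E}[R_{\mathcal{D}}(W) - \hat{R}_S(W)] \le \sqrt{\frac{2\sigma^2}{n-m} I(W; S_{J^c})}$, where $S_{J^c}$ denotes the $n-m$ data points with indices outside $J$. -/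
open MeasureTheory ProbabilityTheory Real Classical

instance {α : Type*} : MeasurableSpace (Finset α) := ⊤

instance {α : Type*} : MeasurableSingletonClass (Finset α) :=
  ⟨fun _ => MeasurableSpace.measurableSet_top⟩

lemma my_sub_one_le_mul_log {a : ℝ} (ha : 0 ≤ a) : a - 1 ≤ a * Real.log a := by
  rcases ha.eq_or_lt with h | h
  · simp [← h]
  · have h1 := Real.log_le_sub_one_of_pos (inv_pos.mpr h)
    rw [Real.log_inv] at h1
    have h2 : a * a⁻¹ = 1 := mul_inv_cancel₀ h.ne'
    nlinarith

lemma my_integral_llr_nonneg {α : Type*} [MeasurableSpace α] (Q P : Measure α)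
    [IsProbabilityMeasure Q] [IsProbabilityMeasure P] (hQP : Q ≪ P)
    (h : Integrable (llr Q P) Q) : 0 ≤ ∫ x, llr Q P x ∂Q := by
  have key : ∫ x, llr Q P x ∂Q
      = ∫ x, (Q.rnDeriv P x).toReal • llr Q P x ∂P := (integral_rnDeriv_smul hQP).symm
  rw [key]
  have h2 : Integrable (fun x => (Q.rnDeriv P x).toReal • llr Q P x) P :=
    (integrable_rnDeriv_smul_iff hQP).mpr h
  have h3 : Integrable (fun x => (Q.rnDeriv P x).toReal - 1) P :=
    (Measure.integrable_toReal_rnDeriv).sub (integrable_const 1)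
  have h4 : ∫ x, ((Q.rnDeriv P x).toReal - 1) ∂P ≤ ∫ x, (Q.rnDeriv P x).toReal • llr Q P x ∂P := by
    refine integral_mono h3 h2 (fun x => ?_)
    simp only [smul_eq_mul, llr_def]
    exact my_sub_one_le_mul_log ENNReal.toReal_nonneg
  refine le_trans (le_of_eq ?_) h4
  rw [integral_sub Measure.integrable_toReal_rnDeriv (integrable_const 1),
    Measure.integral_toReal_rnDeriv hQP]
  simp

lemma my_dv {α : Type*} [MeasurableSpace α] (Q P : Measure α)
    [IsProbabilityMeasure Q] [IsProbabilityMeasure P] (hQP : Q ≪ P)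
    (hllr : Integrable (llr Q P) Q) {g : α → ℝ} (hgQ : Integrable g Q)
    (hexp : Integrable (fun x => exp (g x)) P) :
    ∫ x, g x ∂Q ≤ ∫ x, llr Q P x ∂Q + log (∫ x, exp (g x) ∂P) := by
  haveI := isProbabilityMeasure_tilted hexp
  have hQt : Q ≪ P.tilted g := hQP.trans (absolutelyContinuous_tilted hexp)
  have hint : Integrable (llr Q (P.tilted g)) Q :=
    integrable_llr_tilted_right hQP hgQ hllr hexp
  have h0 : 0 ≤ ∫ x, llr Q (P.tilted g) x ∂Q := my_integral_llr_nonneg _ _ hQt hint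
  rw [integral_llr_tilted_right hQP hgQ hexp hllr] at h0
  linarith

lemma my_abs_mul_le {a b : ℝ} (ha : 0 ≤ a) : |b| * a ≤ |a * Real.log a| + (exp b + exp (-b)) := by
  have h1 : |b| * a - a * Real.log a ≤ exp b + exp (-b) := by
    rcases ha.eq_or_lt with h | h
    · simp [← h]; positivity
    · have key : a * (|b| - Real.log a) ≤ exp |b| := by
        have ht : (|b| - Real.log a) + 1 ≤ exp (|b| - Real.log a) := Real.add_one_le_exp _
        have h5 : a * (|b| - Real.log a) ≤ a * exp (|b| - Real.log a) := by nlinarith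
        refine h5.trans (le_of_eq ?_)
        rw [Real.exp_sub, Real.exp_log h, mul_div_cancel₀ _ h.ne']
      have h2 : exp |b| ≤ exp b + exp (-b) := by
        rcases abs_cases b with ⟨h3, _⟩ | ⟨h3, _⟩ <;> rw [h3] <;>
          nlinarith [Real.exp_pos b, Real.exp_pos (-b)]
      nlinarith
  calc |b| * a ≤ a * Real.log a + (exp b + exp (-b)) := by linarith
    _ ≤ |a * Real.log a| + (exp b + exp (-b)) := by
        have := le_abs_self (a * Real.log a); linarith

lemma my_integrable_of_exp {α : Type*} [MeasurableSpace α] (Q P : Measure α)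
    [IsFiniteMeasure Q] [SigmaFinite P] (hQP : Q ≪ P)
    (hllr : Integrable (llr Q P) Q) {g : α → ℝ} (hg : Measurable g)
    (hexp : Integrable (fun x => exp (g x)) P)
    (hexp' : Integrable (fun x => exp (-g x)) P) : Integrable g Q := by
  refine ⟨hg.aestronglyMeasurable, ?_⟩
  rw [hasFiniteIntegral_iff_norm]
  have hwd : P.withDensity (Q.rnDeriv P) = Q := Measure.withDensity_rnDeriv_eq Q P hQP
  have hrmeas := Measure.measurable_rnDeriv Q P
  have step1 : ∫⁻ x, ENNReal.ofReal ‖g x‖ ∂Q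
      = ∫⁻ x, Q.rnDeriv P x * ENNReal.ofReal ‖g x‖ ∂P := by
    conv_lhs => rw [← hwd]
    rw [lintegral_withDensity_eq_lintegral_mul _ hrmeas (hg.norm.ennreal_ofReal)]
    simp only [Pi.mul_apply]
  have hae := Measure.rnDeriv_lt_top Q P
  have step2 : ∫⁻ x, Q.rnDeriv P x * ENNReal.ofReal ‖g x‖ ∂P
      ≤ ∫⁻ x, (ENNReal.ofReal |(Q.rnDeriv P x).toReal * Real.log (Q.rnDeriv P x).toReal|
          + (ENNReal.ofReal (exp (g x)) + ENNReal.ofReal (exp (-g x)))) ∂P := by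
    refine lintegral_mono_ae ?_
    filter_upwards [hae] with x hx
    have h1 : Q.rnDeriv P x * ENNReal.ofReal ‖g x‖
        = ENNReal.ofReal ((Q.rnDeriv P x).toReal * ‖g x‖) := by
      rw [ENNReal.ofReal_mul ENNReal.toReal_nonneg, ENNReal.ofReal_toReal hx.ne]
    rw [h1]
    calc ENNReal.ofReal ((Q.rnDeriv P x).toReal * ‖g x‖)
        ≤ ENNReal.ofReal (|(Q.rnDeriv P x).toReal * Real.log (Q.rnDeriv P x).toReal|
            + (exp (g x) + exp (-g x))) := by
          refine ENNReal.ofReal_le_ofReal ?_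
          rw [Real.norm_eq_abs, mul_comm]
          exact my_abs_mul_le ENNReal.toReal_nonneg
      _ ≤ _ := by
          rw [ENNReal.ofReal_add (abs_nonneg _) (by positivity),
            ENNReal.ofReal_add (Real.exp_pos _).le (Real.exp_pos _).le]
  have step3 : ∫⁻ x, ENNReal.ofReal |(Q.rnDeriv P x).toReal * Real.log (Q.rnDeriv P x).toReal| ∂P
      < ⊤ := by
    have heq : ∫⁻ x, ENNReal.ofReal |(Q.rnDeriv P x).toReal * Real.log (Q.rnDeriv P x).toReal| ∂P
        = ∫⁻ x, Q.rnDeriv P x * ENNReal.ofReal ‖llr Q P x‖ ∂P := by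
      refine lintegral_congr_ae ?_
      filter_upwards [hae] with x hx
      rw [abs_mul, abs_of_nonneg (ENNReal.toReal_nonneg),
        ENNReal.ofReal_mul ENNReal.toReal_nonneg, ENNReal.ofReal_toReal hx.ne, llr_def,
        Real.norm_eq_abs]
    rw [heq]
    have h6 := lintegral_withDensity_eq_lintegral_mul P hrmeas
      ((measurable_llr Q P).norm.ennreal_ofReal)
    rw [hwd] at h6
    simp only [Pi.mul_apply] at h6
    rw [← h6]
    exact (hasFiniteIntegral_iff_norm _).mp hllr.hasFiniteIntegral
  have hexpfin : ∫⁻ x, ENNReal.ofReal (exp (g x)) ∂P < ⊤ := by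
    have := (hasFiniteIntegral_iff_norm _).mp hexp.hasFiniteIntegral
    simpa [Real.norm_eq_abs, abs_of_pos (Real.exp_pos _)] using this
  have hexpfin' : ∫⁻ x, ENNReal.ofReal (exp (-g x)) ∂P < ⊤ := by
    have := (hasFiniteIntegral_iff_norm _).mp hexp'.hasFiniteIntegral
    simpa [Real.norm_eq_abs, abs_of_pos (Real.exp_pos _)] using this
  calc ∫⁻ x, ENNReal.ofReal ‖g x‖ ∂Q ≤ _ := step1.le.trans step2
    _ < ⊤ := by
        rw [lintegral_add_left (f := fun x =>
              ENNReal.ofReal |(Q.rnDeriv P x).toReal * Real.log (Q.rnDeriv P x).toReal|)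
            ((hrmeas.ennreal_toReal.mul
            (hrmeas.ennreal_toReal.log)).abs.ennreal_ofReal),
          lintegral_add_left (hg.exp.ennreal_ofReal)]
        exact ENNReal.add_lt_top.mpr ⟨step3,
          ENNReal.add_lt_top.mpr ⟨hexpfin, hexpfin'⟩⟩

lemma my_opt_bound {I0 MI c : ℝ} (hMI : 0 ≤ MI) (hc : 0 ≤ c)
    (h : ∀ lam : ℝ, 0 < lam → I0 ≤ MI / lam + lam * c) :
    I0 ≤ Real.sqrt (4 * MI * c) := by
  rcases hMI.eq_or_lt with hMI0 | hMI0
  · have : I0 ≤ 0 := by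
      refine le_of_forall_pos_le_add (fun ε hε => ?_)
      have := h (ε / (c + 1)) (by positivity)
      rw [← hMI0] at this
      have h2 : ε / (c + 1) * c ≤ ε := by
        rw [div_mul_eq_mul_div, div_le_iff₀ (by positivity)]
        nlinarith
      rw [zero_div, zero_add] at this
      linarith
    exact this.trans (Real.sqrt_nonneg _)
  rcases hc.eq_or_lt with hc0 | hc0
  · have : I0 ≤ 0 := by
      refine le_of_forall_pos_le_add (fun ε hε => ?_)
      have := h (MI / ε) (by positivity)
      have h3 : MI / (MI / ε) = ε := by field_simp
      rw [← hc0, mul_zero, add_zero, h3] at this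
      linarith
    exact this.trans (Real.sqrt_nonneg _)
  · set a := Real.sqrt MI with ha
    set b := Real.sqrt c with hb
    have ha0 : 0 < a := Real.sqrt_pos.mpr hMI0
    have hb0 : 0 < b := Real.sqrt_pos.mpr hc0
    have ha2 : a ^ 2 = MI := Real.sq_sqrt hMI
    have hb2 : b ^ 2 = c := Real.sq_sqrt hc
    have hlam := h (a / b) (by positivity)
    have heq : MI / (a / b) + (a / b) * c = 2 * (a * b) := by
      field_simp
      nlinarith
    rw [heq] at hlam
    refine hlam.trans (le_of_eq ?_)
    have : 4 * MI * c = (2 * (a * b)) ^ 2 := by nlinarith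
    rw [this, Real.sqrt_sq (by positivity)]

lemma my_pi_map {𝒵 : Type*} [MeasurableSpace 𝒵] (D : Measure 𝒵) [IsProbabilityMeasure D]
    {N n : ℕ} (e : Fin N → Fin n) (he : Function.Injective e) :
    (Measure.pi (fun _ : Fin n => D)).map (fun s k => s (e k))
      = Measure.pi (fun _ : Fin N => D) := by
  have hT : Measurable (fun (s : Fin n → 𝒵) (k : Fin N) => s (e k)) :=
    measurable_pi_lambda _ (fun k => measurable_pi_apply _)
  refine (Measure.pi_eq (fun s hs => ?_)).symm
  rw [Measure.map_apply hT (MeasurableSet.univ_pi hs)]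
  have hpre : (fun (s' : Fin n → 𝒵) (k : Fin N) => s' (e k)) ⁻¹' (Set.pi Set.univ s)
      = Set.pi Set.univ (fun i => ⋂ (k : Fin N) (_ : e k = i), s k) := by
    ext x
    simp only [Set.mem_preimage, Set.mem_pi, Set.mem_univ, true_implies, Set.mem_iInter]
    constructor
    · intro hx i k hk; subst hk; exact hx k
    · intro hx k; exact hx (e k) k rfl
  rw [hpre, Measure.pi_pi]
  have hSe : ∀ k : Fin N, (⋂ (k' : Fin N) (_ : e k' = e k), s k') = s k := by
    intro k
    ext x
    simp only [Set.mem_iInter]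
    exact ⟨fun hx => hx k rfl, fun hx k' hk' => by rw [he hk']; exact hx⟩
  calc ∏ i : Fin n, D (⋂ (k : Fin N) (_ : e k = i), s k)
      = ∏ i ∈ Finset.univ.image e, D (⋂ (k : Fin N) (_ : e k = i), s k) := by
        refine (Finset.prod_subset (Finset.subset_univ _) (fun i _ hi => ?_)).symm
        have : (⋂ (k : Fin N) (_ : e k = i), s k) = Set.univ := by
          ext x
          simp only [Set.mem_iInter, Set.mem_univ, iff_true]
          intro k hk
          exact absurd (Finset.mem_image_of_mem e (Finset.mem_univ k)) (hk ▸ hi)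
        rw [this]; simp
    _ = ∏ k : Fin N, D (⋂ (k' : Fin N) (_ : e k' = e k), s k') :=
        Finset.prod_image (fun a _ b _ hab => he hab)
    _ = ∏ k : Fin N, D (s k) := by
        exact Finset.prod_congr rfl (fun k _ => by rw [hSe k])

lemma my_comb {n m : ℕ} (hm : m < n) (x : Fin n → ℝ) :
    ∑ A ∈ Finset.powersetCard m (Finset.univ : Finset (Fin n)),
      ((((n : ℝ) - m))⁻¹ * ∑ i ∈ Aᶜ, x i - (n : ℝ)⁻¹ * ∑ i, x i) = 0 := by
  set C := Finset.powersetCard m (Finset.univ : Finset (Fin n)) with hC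
  have hcardC : C.card = n.choose m := by
    simp [hC, Finset.card_powersetCard]
  have key : ∑ A ∈ C, ∑ i ∈ Aᶜ, x i = ((n-1).choose m : ℝ) * ∑ i, x i := by
    have h1 : ∀ A : Finset (Fin n), ∑ i ∈ Aᶜ, x i = ∑ i, (if i ∈ Aᶜ then x i else 0) := by
      intro A
      rw [Finset.sum_ite_mem, Finset.univ_inter]
    simp_rw [h1]
    rw [Finset.sum_comm]
    have h2 : ∀ i : Fin n, ∑ A ∈ C, (if i ∈ Aᶜ then x i else 0)
        = ((n-1).choose m : ℝ) * x i := by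
      intro i
      rw [← Finset.sum_filter]
      rw [Finset.sum_const, nsmul_eq_mul]
      congr 2
      have hfilt : C.filter (fun A => i ∈ Aᶜ) = Finset.powersetCard m (Finset.univ.erase i) := by
        ext A
        simp only [Finset.mem_filter, Finset.mem_powersetCard, Finset.mem_compl, hC,
          Finset.subset_erase]
        tauto
      rw [hfilt, Finset.card_powersetCard, Finset.card_erase_of_mem (Finset.mem_univ i),
        Finset.card_univ, Fintype.card_fin]
    simp_rw [h2]
    rw [← Finset.mul_sum]
  have hnat : ((n-1).choose m) * n = n.choose m * (n - m) := by
    have := Nat.choose_mul_succ_eq (n-1) m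
    rwa [show n - 1 + 1 = n by omega] at this
  have hcast : (((n-1).choose m : ℝ)) * n = (n.choose m : ℝ) * ((n : ℝ) - m) := by
    have := congrArg (fun k : ℕ => (k : ℝ)) hnat
    push_cast [Nat.cast_sub hm.le] at this
    exact this
  rw [Finset.sum_sub_distrib, ← Finset.mul_sum, key, Finset.sum_const, nsmul_eq_mul, hcardC]
  have hn0 : (0:ℝ) < n := by
    have : 0 < n := Nat.zero_lt_of_lt hm
    exact_mod_cast this
  have hnm0 : (0:ℝ) < (n:ℝ) - m := by
    have : (m:ℝ) < n := by exact_mod_cast hm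
    linarith
  have hcoef : ((n:ℝ) - m)⁻¹ * (((n-1).choose m : ℕ) : ℝ) = (n.choose m : ℝ) * (n:ℝ)⁻¹ := by
    field_simp
    linarith [hcast]
  linear_combination (∑ i, x i) * hcoef

/-- Data-dependent mutual information generalization bound (Theorem 1 of the paper):
with `S ~ D^n` i.i.d., `J ⊆ [n]` a uniformly random subset of size `m` independent of
`(S, W)`, and `ℓ(Z, w)` `σ`-subgaussian for each `w`,
`𝔼[R_D(W) - R̂_S(W)] ≤ √((2σ²/(n-m)) · I(W; S_{Jᶜ}))`, where `S_{Jᶜ}` is the tuple of the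
`n - m` data points with indices outside `J` (listed in increasing index order), and
`MI` is any real upper bound on the mutual information `I(W; S_{Jᶜ})`. -/
theorem data_dependent_mutual_information_bound
    {Ω 𝒵 𝒲 : Type*} [MeasurableSpace Ω] [MeasurableSpace 𝒵] [MeasurableSpace 𝒲]
    (μ : Measure Ω) [IsProbabilityMeasure μ]
    (D : Measure 𝒵) [IsProbabilityMeasure D]
    (n m : ℕ) (hm : m < n) (Z : Fin n → Ω → 𝒵) (hZ : ∀ i, Measurable (Z i))
    (hiid : μ.map (fun ω i => Z i ω) = Measure.pi (fun _ : Fin n => D))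
    (W : Ω → 𝒲) (hW : Measurable W)
    (J : Ω → Finset (Fin n)) (hJmeas : Measurable J)
    (hJcard : ∀ ω, (J ω).card = m)
    (hJunif : μ.map J = (PMF.uniformOfFinset (Finset.powersetCard m Finset.univ)
      ((Finset.powersetCard_nonempty (s := (Finset.univ : Finset (Fin n)))).mpr (by simpa using hm.le))).toMeasure)
    (hJindep : IndepFun (fun ω => ((fun i => Z i ω), W ω)) J μ)
    (SJc : Ω → Fin (n - m) → 𝒵)
    (hSJc : ∀ ω k, SJc ω k =
      Z ((((J ω)ᶜ).orderIsoOfFin (by simp [Finset.card_compl, hJcard ω]) k : Fin n)) ω)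
    (ℓ : 𝒵 → 𝒲 → ℝ) (hℓ : Measurable (fun p : 𝒵 × 𝒲 => ℓ p.1 p.2))
    (σ : ℝ) (hσ : 0 ≤ σ)
    (hℓint : ∀ w, Integrable (fun z => ℓ z w) D)
    (hSGint : ∀ (w : 𝒲) (lam : ℝ),
      Integrable (fun z => exp (lam * (ℓ z w - ∫ z', ℓ z' w ∂D))) D)
    (hSG : ∀ (w : 𝒲) (lam : ℝ),
      ∫ z, exp (lam * (ℓ z w - ∫ z', ℓ z' w ∂D)) ∂D ≤ exp (lam ^ 2 * σ ^ 2 / 2))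
    (hGenInt : Integrable
      (fun ω => (∫ z, ℓ z (W ω) ∂D) - (n : ℝ)⁻¹ * ∑ i, ℓ (Z i ω) (W ω)) μ)
    (MI : ℝ)
    (hMI : klDiv (μ.map (fun ω => (W ω, SJc ω)))
        ((μ.map W).prod (μ.map SJc)) ≤ (MI : EReal)) :
    ∫ ω, ((∫ z, ℓ z (W ω) ∂D) - (n : ℝ)⁻¹ * ∑ i, ℓ (Z i ω) (W ω)) ∂μ
      ≤ Real.sqrt (2 * σ ^ 2 / ((n : ℝ) - m) * MI) := by
    classical
  have hn0 : 0 < n := Nat.zero_lt_of_lt hm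
  have hNcast : ((n - m : ℕ) : ℝ) = (n : ℝ) - m := by
    push_cast [Nat.cast_sub hm.le]; ring
  have hNR : (0:ℝ) < (n : ℝ) - m := by
    have : (m:ℝ) < n := by exact_mod_cast hm
    linarith
  set C := Finset.powersetCard m (Finset.univ : Finset (Fin n)) with hCdef
  have hcardC : C.card = n.choose m := by
    simp [hCdef, Finset.card_powersetCard]
  have hchoose0 : (n.choose m : ENNReal) ≠ 0 := by
    exact_mod_cast (Nat.choose_pos hm.le).ne'
  -- basic measurable objects
  set X : Ω → (Fin n → 𝒵) × 𝒲 := fun ω => (fun i => Z i ω, W ω) with hXdef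
  have hXmeas : Measurable X := (measurable_pi_lambda _ hZ).prodMk hW
  have hRbSM : StronglyMeasurable (fun w => ∫ z, ℓ z w ∂D) :=
    (hℓ.comp measurable_swap).stronglyMeasurable.integral_prod_right'
  set f : 𝒲 × (Fin (n - m) → 𝒵) → ℝ :=
    fun p => (∫ z, ℓ z p.1 ∂D) - ((n : ℝ) - m)⁻¹ * ∑ k, ℓ (p.2 k) p.1 with hfdef
  have hfmeas : Measurable f := by
    refine (hRbSM.measurable.comp measurable_fst).sub (measurable_const.mul ?_)
    exact Finset.measurable_sum _ (fun k _ =>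
      Measurable.comp (f := fun p : 𝒲 × (Fin (n - m) → 𝒵) => (p.2 k, p.1)) hℓ
        (((measurable_pi_apply k).comp measurable_snd).prodMk measurable_fst))
  -- the selection function φ
  set i0 : Fin n := ⟨0, hn0⟩ with hi0def
  set φ : ((Fin n → 𝒵) × 𝒲) × Finset (Fin n) → (Fin (n - m) → 𝒵) := fun q =>
    if h : (q.2)ᶜ.card = n - m then fun k => q.1.1 (((q.2)ᶜ.orderIsoOfFin h k : Fin n))
    else fun _ => q.1.1 i0 with hφdef
  have hφslice : ∀ A : Finset (Fin n), Measurable (fun p : (Fin n → 𝒵) × 𝒲 => φ (p, A)) := by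
    intro A
    by_cases h : Aᶜ.card = n - m
    · simp only [hφdef, dif_pos h]
      exact measurable_pi_lambda _ (fun k => (measurable_pi_apply _).comp measurable_fst)
    · simp only [hφdef, dif_neg h]
      exact measurable_pi_lambda _ (fun k => (measurable_pi_apply _).comp measurable_fst)
  have hφmeas : Measurable φ := measurable_from_prod_countable_left hφslice
  have hcardJc : ∀ ω, (J ω)ᶜ.card = n - m := by
    intro ω
    simp [Finset.card_compl, hJcard ω]
  have hSJcphi : SJc = fun ω => φ (X ω, J ω) := by
    funext ω
    funext k
    rw [hSJc ω k]
    simp only [hφdef, hXdef, dif_pos (hcardJc ω)]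
  have hSJcmeas : Measurable SJc := by
    rw [hSJcphi]
    exact hφmeas.comp (hXmeas.prodMk hJmeas)
  -- laws
  set WS : Ω → 𝒲 × (Fin (n - m) → 𝒵) := fun ω => (W ω, SJc ω) with hWSdef
  have hWSmeas : Measurable WS := hW.prodMk hSJcmeas
  set Q : Measure (𝒲 × (Fin (n - m) → 𝒵)) := μ.map WS with hQdef
  haveI : IsProbabilityMeasure Q := Measure.isProbabilityMeasure_map hWSmeas.aemeasurable
  set κ : Measure (Finset (Fin n)) := μ.map J with hκdef
  haveI : IsProbabilityMeasure κ := Measure.isProbabilityMeasure_map hJmeas.aemeasurable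
  set ρ : Measure ((Fin n → 𝒵) × 𝒲) := μ.map X with hρdef
  haveI : IsProbabilityMeasure ρ := Measure.isProbabilityMeasure_map hXmeas.aemeasurable
  haveI : IsProbabilityMeasure (μ.map W) := Measure.isProbabilityMeasure_map hW.aemeasurable
  haveI : IsProbabilityMeasure (μ.map SJc) := Measure.isProbabilityMeasure_map hSJcmeas.aemeasurable
  set P : Measure (𝒲 × (Fin (n - m) → 𝒵)) := (μ.map W).prod (μ.map SJc) with hPdef
  haveI : IsProbabilityMeasure P := by rw [hPdef]; infer_instance
  have hprodXJ : μ.map (fun ω => (X ω, J ω)) = ρ.prod κ :=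
    (indepFun_iff_map_prod_eq_prod_map_map hXmeas.aemeasurable hJmeas.aemeasurable).mp hJindep
  have hκsingleton : ∀ A, κ {A} = if A ∈ C then ((n.choose m : ENNReal))⁻¹ else 0 := by
    intro A
    rw [hJunif, PMF.toMeasure_apply_singleton _ _ (measurableSet_singleton A)]
    rw [PMF.uniformOfFinset_apply]
    simp only [← hCdef, hcardC]
  have hfst : ρ.map Prod.fst = Measure.pi (fun _ : Fin n => D) := by
    rw [hρdef, Measure.map_map measurable_fst hXmeas]
    exact hiid
  have hφA : ∀ A ∈ C, ρ.map (fun p => φ (p, A)) = Measure.pi (fun _ : Fin (n - m) => D) := by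
    intro A hA
    have hAcard : Aᶜ.card = n - m := by
      rw [Finset.card_compl, (Finset.mem_powersetCard.mp hA).2]
      simp
    have hfun : (fun p : (Fin n → 𝒵) × 𝒲 => φ (p, A))
        = (fun (s : Fin n → 𝒵) (k : Fin (n - m)) => s ((Aᶜ.orderIsoOfFin hAcard k : Fin n)))
          ∘ Prod.fst := by
      funext p
      simp only [hφdef, dif_pos hAcard, Function.comp_apply]
    rw [hfun, ← Measure.map_map (measurable_pi_lambda _ (fun k => measurable_pi_apply _))
      measurable_fst, hfst]
    exact my_pi_map D _ (fun a b hab => (Aᶜ.orderIsoOfFin hAcard).injective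
      (Subtype.coe_injective hab))
  -- the marginal law of SJc
  have hSJclaw : μ.map SJc = Measure.pi (fun _ : Fin (n - m) => D) := by
    have hmm : Measure.map (fun ω => φ (X ω, J ω)) μ = Measure.map φ (ρ.prod κ) := by
      rw [← hprodXJ, Measure.map_map hφmeas (hXmeas.prodMk hJmeas)]
      rfl
    rw [hSJcphi, hmm]
    refine Measure.ext (fun E hE => ?_)
    rw [Measure.map_apply hφmeas hE, Measure.prod_apply (hφmeas hE)]
    have hκapply : ∀ s : Set (Finset (Fin n)),
        κ s = ∑ A ∈ C, (n.choose m : ENNReal)⁻¹ * s.indicator (fun _ => 1) A := by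
      intro s
      rw [hJunif, PMF.toMeasure_apply _ MeasurableSpace.measurableSet_top,
        tsum_fintype]
      rw [← Finset.sum_subset (Finset.subset_univ C) ?hzero]
      · refine Finset.sum_congr rfl (fun A hA => ?_)
        by_cases hAs : A ∈ s
        · simp [Set.indicator_of_mem hAs, PMF.uniformOfFinset_apply, ← hCdef, hA, hcardC]
        · simp [Set.indicator_of_notMem hAs]
      case hzero =>
        intro A _ hA
        by_cases hAs : A ∈ s
        · simp [Set.indicator_of_mem hAs, PMF.uniformOfFinset_apply, ← hCdef, hA]
        · simp [Set.indicator_of_notMem hAs]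
    calc ∫⁻ p, κ (Prod.mk p ⁻¹' (φ ⁻¹' E)) ∂ρ
        = ∫⁻ p, ∑ A ∈ C, (n.choose m : ENNReal)⁻¹
            * ((fun p => φ (p, A)) ⁻¹' E).indicator (fun _ => 1) p ∂ρ := by
          refine lintegral_congr (fun p => ?_)
          rw [hκapply]
          rfl
      _ = ∑ A ∈ C, ∫⁻ p, (n.choose m : ENNReal)⁻¹
            * ((fun p => φ (p, A)) ⁻¹' E).indicator (fun _ => 1) p ∂ρ := by
          refine lintegral_finset_sum _ (fun A _ => ?_)
          exact (measurable_const.indicator ((hφslice A) hE)).const_mul _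
      _ = ∑ A ∈ C, (n.choose m : ENNReal)⁻¹ * ρ ((fun p => φ (p, A)) ⁻¹' E) := by
          refine Finset.sum_congr rfl (fun A _ => ?_)
          rw [lintegral_const_mul _ (measurable_const.indicator ((hφslice A) hE)),
            lintegral_indicator ((hφslice A) hE)]
          simp
      _ = ∑ A ∈ C, (n.choose m : ENNReal)⁻¹ * (Measure.pi (fun _ : Fin (n - m) => D)) E := by
          refine Finset.sum_congr rfl (fun A hA => ?_)
          rw [← Measure.map_apply (hφslice A) hE, hφA A hA]
      _ = (Measure.pi (fun _ : Fin (n - m) => D)) E := by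
          rw [Finset.sum_const, hcardC, nsmul_eq_mul, ← mul_assoc,
            ENNReal.mul_inv_cancel hchoose0 (ENNReal.natCast_ne_top _), one_mul]
  -- extract KL facts
  have hcond : Q ≪ P ∧ Integrable (llr Q P) Q := by
    by_contra h
    rw [klDiv, if_neg h] at hMI
    exact (EReal.coe_lt_top MI).not_ge hMI
  obtain ⟨hQP, hllrQ⟩ := hcond
  have hKL : ∫ x, llr Q P x ∂Q ≤ MI := by
    rw [klDiv, if_pos ⟨hQP, hllrQ⟩] at hMI
    exact EReal.coe_le_coe_iff.mp hMI
  have hMI0 : 0 ≤ MI := le_trans (my_integral_llr_nonneg Q P hQP hllrQ) hKL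
  -- MGF bounds
  have hslice : ∀ (lam : ℝ) (w : 𝒲),
      Integrable (fun s : Fin (n - m) → 𝒵 => exp (lam * f (w, s)))
        (Measure.pi (fun _ : Fin (n - m) => D)) ∧
      ∫ s, exp (lam * f (w, s)) ∂(Measure.pi (fun _ : Fin (n - m) => D))
        ≤ exp (lam ^ 2 * σ ^ 2 / (2 * ((n : ℝ) - m))) := by
    intro lam w
    set lam' := -(lam / ((n : ℝ) - m)) with hlam'def
    have hprodid : ∀ s : Fin (n - m) → 𝒵,
        exp (lam * f (w, s)) = ∏ k, exp (lam' * (ℓ (s k) w - ∫ z', ℓ z' w ∂D)) := by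
      intro s
      rw [← Real.exp_sum]
      congr 1
      have hc : ∑ k : Fin (n - m), lam' * (ℓ (s k) w - ∫ z', ℓ z' w ∂D)
          = lam' * ((∑ k, ℓ (s k) w) - ((n - m : ℕ) : ℝ) * ∫ z', ℓ z' w ∂D) := by
        rw [← Finset.mul_sum, Finset.sum_sub_distrib, Finset.sum_const, Finset.card_univ,
          Fintype.card_fin, nsmul_eq_mul]
      rw [hc, hlam'def, hNcast, hfdef]
      simp only
      field_simp
      ring
    letI : MeasureSpace 𝒵 := ⟨D⟩
    have hvol : Measure.pi (fun _ : Fin (n - m) => D) = (volume : Measure (Fin (n - m) → 𝒵)) :=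
      rfl
    constructor
    · simp only [hprodid]
      rw [hvol]
      exact Integrable.fintype_prod (fun k => hSGint w lam')
    · simp only [hprodid]
      rw [hvol]
      have := integral_fintype_prod_eq_pow (𝕜 := ℝ) (ι := Fin (n - m)) (μ := D)
        (fun z => exp (lam' * (ℓ z w - ∫ z', ℓ z' w ∂D)))
      rw [← hvol, this, Fintype.card_fin]
      have hbase : ∫ z, exp (lam' * (ℓ z w - ∫ z', ℓ z' w ∂D)) ∂D
          ≤ exp (lam' ^ 2 * σ ^ 2 / 2) := hSG w lam'
      have hbase0 : 0 ≤ ∫ z, exp (lam' * (ℓ z w - ∫ z', ℓ z' w ∂D)) ∂D :=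
        integral_nonneg (fun z => (Real.exp_pos _).le)
      calc (∫ z, exp (lam' * (ℓ z w - ∫ z', ℓ z' w ∂D)) ∂D) ^ (n - m)
          ≤ (exp (lam' ^ 2 * σ ^ 2 / 2)) ^ (n - m) := pow_le_pow_left₀ hbase0 hbase _
        _ = exp (lam ^ 2 * σ ^ 2 / (2 * ((n : ℝ) - m))) := by
            rw [← Real.exp_nat_mul]
            congr 1
            rw [hlam'def]
            rw [hNcast]
            field_simp
  have hMGF : ∀ lam : ℝ, Integrable (fun p => exp (lam * f p)) P ∧
      ∫ p, exp (lam * f p) ∂P ≤ exp (lam ^ 2 * σ ^ 2 / (2 * ((n : ℝ) - m))) := by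
    intro lam
    have hPeq : P = (μ.map W).prod (Measure.pi (fun _ : Fin (n - m) => D)) := by
      rw [hPdef, hSJclaw]
    have hgm : Measurable (fun p : 𝒲 × (Fin (n - m) → 𝒵) => exp (lam * f p)) :=
      (hfmeas.const_mul lam).exp
    have hintg : Integrable (fun p => exp (lam * f p)) P := by
      rw [hPeq]
      refine (integrable_prod_iff hgm.aestronglyMeasurable).mpr ⟨?_, ?_⟩
      · exact Filter.Eventually.of_forall (fun w => (hslice lam w).1)
      · have hbdd : ∀ w : 𝒲, ‖∫ s, ‖exp (lam * f (w, s))‖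
            ∂(Measure.pi (fun _ : Fin (n - m) => D))‖
            ≤ exp (lam ^ 2 * σ ^ 2 / (2 * ((n : ℝ) - m))) := by
          intro w
          have h1 : ∀ s, ‖exp (lam * f (w, s))‖ = exp (lam * f (w, s)) := fun s => by
            rw [Real.norm_eq_abs, abs_of_pos (Real.exp_pos _)]
          simp only [h1]
          rw [Real.norm_eq_abs, abs_of_nonneg (integral_nonneg (fun s => (Real.exp_pos _).le))]
          exact (hslice lam w).2
        refine Integrable.mono' (integrable_const
          (exp (lam ^ 2 * σ ^ 2 / (2 * ((n : ℝ) - m))))) ?_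
          (Filter.Eventually.of_forall hbdd)
        exact ((hgm.norm.stronglyMeasurable).integral_prod_right').aestronglyMeasurable
    refine ⟨hintg, ?_⟩
    rw [hPeq] at hintg ⊢
    rw [integral_prod _ hintg]
    calc ∫ w, ∫ s, exp (lam * f (w, s)) ∂(Measure.pi (fun _ : Fin (n - m) => D)) ∂(μ.map W)
        ≤ ∫ _, exp (lam ^ 2 * σ ^ 2 / (2 * ((n : ℝ) - m))) ∂(μ.map W) := by
          refine integral_mono hintg.integral_prod_left (integrable_const _)
            (fun w => (hslice lam w).2)
      _ = exp (lam ^ 2 * σ ^ 2 / (2 * ((n : ℝ) - m))) := by simp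
  -- integrability of f with respect to Q
  have hfQint : Integrable f Q := by
    refine my_integrable_of_exp Q P hQP hllrQ hfmeas ?_ ?_
    · have := (hMGF 1).1
      simpa using this
    · have := (hMGF (-1)).1
      simpa using this
  have hfμint : Integrable (fun ω => f (WS ω)) μ := by
    have := (integrable_map_measure hfmeas.aestronglyMeasurable hWSmeas.aemeasurable).mp hfQint
    exact this
  -- Step A : change of integrand
  set G : ((Fin n → 𝒵) × 𝒲) × Finset (Fin n) → ℝ := fun q =>
    ((n : ℝ) - m)⁻¹ * ∑ i ∈ (q.2)ᶜ, ℓ (q.1.1 i) q.1.2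
      - (n : ℝ)⁻¹ * ∑ i, ℓ (q.1.1 i) q.1.2 with hGdef
  have hGslice : ∀ A : Finset (Fin n), Measurable (fun p : (Fin n → 𝒵) × 𝒲 => G (p, A)) := by
    intro A
    have h1 : (fun p : (Fin n → 𝒵) × 𝒲 => G (p, A)) = fun p =>
        ((n : ℝ) - m)⁻¹ * ∑ i ∈ Aᶜ, ℓ (p.1 i) p.2 - (n : ℝ)⁻¹ * ∑ i, ℓ (p.1 i) p.2 := by
      funext p
      rw [hGdef]
    rw [h1]
    refine Measurable.sub (measurable_const.mul ?_) (measurable_const.mul ?_) <;>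
      exact Finset.measurable_sum _ (fun i _ =>
        Measurable.comp (f := fun p : (Fin n → 𝒵) × 𝒲 => (p.1 i, p.2)) hℓ
          (((measurable_pi_apply i).comp measurable_fst).prodMk measurable_snd))
  have hGmeas : Measurable G := measurable_from_prod_countable_left hGslice
  have hsumconv : ∀ ω, ∑ k, ℓ (SJc ω k) (W ω) = ∑ i ∈ (J ω)ᶜ, ℓ (Z i ω) (W ω) := by
    intro ω
    have hAc := hcardJc ω
    calc ∑ k, ℓ (SJc ω k) (W ω)
        = ∑ k, (fun i => ℓ (Z i ω) (W ω)) (((J ω)ᶜ.orderIsoOfFin hAc k : Fin n)) := by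
          refine Finset.sum_congr rfl (fun k _ => ?_)
          rw [hSJc ω k]
      _ = ∑ i ∈ (J ω)ᶜ, ℓ (Z i ω) (W ω) := by
          rw [← Finset.sum_coe_sort ((J ω)ᶜ) (fun i => ℓ (Z i ω) (W ω))]
          exact Fintype.sum_equiv ((J ω)ᶜ.orderIsoOfFin hAc).toEquiv _ _ (fun k => rfl)
  have hGXJ : ∀ ω, G (X ω, J ω)
      = ((∫ z, ℓ z (W ω) ∂D) - (n : ℝ)⁻¹ * ∑ i, ℓ (Z i ω) (W ω)) - f (WS ω) := by
    intro ω
    rw [hGdef, hfdef, hWSdef]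
    simp only [hXdef]
    rw [hsumconv ω]
    ring
  have hGint : Integrable (fun ω => G (X ω, J ω)) μ := by
    have heq : (fun ω => G (X ω, J ω))
        = fun ω => ((∫ z, ℓ z (W ω) ∂D) - (n : ℝ)⁻¹ * ∑ i, ℓ (Z i ω) (W ω)) - f (WS ω) :=
      funext hGXJ
    rw [heq]
    exact hGenInt.sub hfμint
  have hGprodint : Integrable G (ρ.prod κ) := by
    rw [← hprodXJ]
    exact (integrable_map_measure hGmeas.aestronglyMeasurable
      ((hXmeas.prodMk hJmeas)).aemeasurable).mpr hGint
  have hGzero : ∫ ω, G (X ω, J ω) ∂μ = 0 := by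
    have h1 : ∫ ω, G (X ω, J ω) ∂μ = ∫ q, G q ∂(μ.map (fun ω => (X ω, J ω))) :=
      (integral_map (hXmeas.prodMk hJmeas).aemeasurable hGmeas.aestronglyMeasurable).symm
    rw [h1, hprodXJ, integral_prod _ hGprodint]
    have hinner : ∀ p : (Fin n → 𝒵) × 𝒲, ∫ A, G (p, A) ∂κ = 0 := by
      intro p
      rw [integral_fintype (Integrable.of_finite)]
      have hterm : ∀ A : Finset (Fin n), κ.real {A} • G (p, A)
          = if A ∈ C then ((n.choose m : ℝ))⁻¹ * G (p, A) else 0 := by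
        intro A
        rw [measureReal_def, hκsingleton A]
        by_cases hA : A ∈ C
        · simp [hA, smul_eq_mul]
        · simp [hA]
      simp only [hterm]
      rw [Finset.sum_ite_mem, Finset.univ_inter, ← Finset.mul_sum]
      have := my_comb hm (fun i => ℓ (p.1 i) p.2)
      rw [hGdef]
      simp only
      rw [← hCdef] at this
      rw [this, mul_zero]
    simp only [hinner]
    simp
  have hstepA : ∫ ω, ((∫ z, ℓ z (W ω) ∂D) - (n : ℝ)⁻¹ * ∑ i, ℓ (Z i ω) (W ω)) ∂μ
      = ∫ p, f p ∂Q := by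
    have h2 : ∫ ω, (((∫ z, ℓ z (W ω) ∂D) - (n : ℝ)⁻¹ * ∑ i, ℓ (Z i ω) (W ω)) - f (WS ω)) ∂μ
        = 0 := by
      rw [← hGzero]
      exact (integral_congr_ae (Filter.Eventually.of_forall (fun ω => (hGXJ ω).symm)))
    rw [integral_sub hGenInt hfμint] at h2
    have h3 : ∫ ω, f (WS ω) ∂μ = ∫ p, f p ∂Q :=
      (integral_map hWSmeas.aemeasurable hfmeas.aestronglyMeasurable).symm
    linarith
  -- DV bound for each lam > 0
  have hbound : ∀ lam : ℝ, 0 < lam →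
      ∫ p, f p ∂Q ≤ MI / lam + lam * (σ ^ 2 / (2 * ((n : ℝ) - m))) := by
    intro lam hlam
    have h1 := my_dv Q P hQP hllrQ (hfQint.const_mul lam) (hMGF lam).1
    rw [integral_const_mul] at h1
    have h2 : log (∫ p, exp (lam * f p) ∂P) ≤ lam ^ 2 * σ ^ 2 / (2 * ((n : ℝ) - m)) := by
      rcases (integral_nonneg (fun p => (Real.exp_pos (lam * f p)).le)
        (μ := P) (f := fun p => exp (lam * f p))).eq_or_lt with h0 | h0
      · rw [← h0, Real.log_zero]
        positivity
      · rw [Real.log_le_iff_le_exp h0]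
        exact (hMGF lam).2
    have h3 : lam * ∫ p, f p ∂Q ≤ MI + lam ^ 2 * σ ^ 2 / (2 * ((n : ℝ) - m)) :=
      le_trans h1 (add_le_add hKL h2)
    have h4 : lam * (MI / lam + lam * (σ ^ 2 / (2 * ((n : ℝ) - m))))
        = MI + lam ^ 2 * σ ^ 2 / (2 * ((n : ℝ) - m)) := by
      field_simp
    have h5 : lam * ∫ p, f p ∂Q ≤ lam * (MI / lam + lam * (σ ^ 2 / (2 * ((n : ℝ) - m)))) := by
      rw [h4]; exact h3
    exact le_of_mul_le_mul_left h5 hlam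
  -- conclude
  rw [hstepA]
  have hc0 : 0 ≤ σ ^ 2 / (2 * ((n : ℝ) - m)) := by positivity
  have := my_opt_bound hMI0 hc0 hbound
  refine this.trans (le_of_eq ?_)
  congr 1
  field_simp
  ring
end
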